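/- If X = X* ∈ L(H_n ⊗ H_m) is k-block positive, then X has at most (n−k)(m−k) negative eigenvalues (counted with multiplicity). -/

import Mathlib

noncomputable section
open scoped BigOperators

/-- Inner product (conjugate-linear in the first argument). -/
def ip {ι : Type*} [Fintype ι] (w v : ι → ℂ) : ℂ := ∑ p, star (w p) * v p

/-- Euclidean norm. -/
def nrm {ι : Type*} [Fintype ι] (v : ι → ℂ) : ℝ := Real.sqrt (ip v v).re

/-- Elementary tensor (product vector). -/
def prodVec {n m : ℕ} (a : Fin n → ℂ) (b : Fin m → ℂ) : Fin n × Fin m → ℂ :=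
  fun p => a p.1 * b p.2

/-- Schmidt rank at most `k`: `v` is a sum of `k` product vectors. -/
def SRle {n m : ℕ} (k : ℕ) (v : Fin n × Fin m → ℂ) : Prop :=
  ∃ (a : Fin k → Fin n → ℂ) (b : Fin k → Fin m → ℂ), v = ∑ i, prodVec (a i) (b i)

/-- The `k`-th vector norm. -/
def vecNorm {n m : ℕ} (k : ℕ) (v : Fin n × Fin m → ℂ) : ℝ :=
  sSup {r | ∃ w, nrm w = 1 ∧ SRle k w ∧ r = ‖ip w v‖}

/-- The `k`-th operator norm. -/
def opNorm {n m : ℕ} (k : ℕ) (X : Matrix (Fin n × Fin m) (Fin n × Fin m) ℂ) : ℝ :=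
  sSup {r | ∃ v w, nrm v = 1 ∧ nrm w = 1 ∧ SRle k v ∧ SRle k w ∧
    r = ‖ip w (X.mulVec v)‖}

/-- Rank-one operator `|w⟩⟨v|`. -/
def outer {ι : Type*} (w v : ι → ℂ) : Matrix ι ι ℂ := Matrix.of fun p q => w p * star (v q)

/-- `k`-block positivity. -/
def BlockPos {n m : ℕ} (k : ℕ) (Y : Matrix (Fin n × Fin m) (Fin n × Fin m) ℂ) : Prop :=
  ∀ v : Fin n × Fin m → ℂ, nrm v = 1 → SRle k v → 0 ≤ (ip v (Y.mulVec v)).re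

/-- Schmidt number at most `k`. -/
def SNle {n m : ℕ} (k : ℕ) (ρ : Matrix (Fin n × Fin m) (Fin n × Fin m) ℂ) : Prop :=
  ∃ (N : ℕ) (p : Fin N → ℝ) (v : Fin N → Fin n × Fin m → ℂ),
    (∀ i, 0 ≤ p i) ∧ (∑ i, p i) = 1 ∧ (∀ i, nrm (v i) = 1) ∧ (∀ i, SRle k (v i)) ∧
    ρ = ∑ i, (p i : ℂ) • outer (v i) (v i)

namespace S17

variable {ι : Type*} [Fintype ι]

lemma ip_add_left (x y z : ι → ℂ) : ip (x + y) z = ip x z + ip y z := by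
  simp [ip, mul_add, add_mul, Finset.sum_add_distrib]

lemma ip_add_right (x y z : ι → ℂ) : ip x (y + z) = ip x y + ip x z := by
  simp [ip, mul_add, Finset.sum_add_distrib]

lemma ip_smul_left (s : ℂ) (x y : ι → ℂ) : ip (s • x) y = star s * ip x y := by
  simp [ip, Finset.mul_sum, mul_assoc]

lemma ip_smul_right (s : ℂ) (x y : ι → ℂ) : ip x (s • y) = s * ip x y := by
  simp [ip, Finset.mul_sum]; ring_nf
  exact Finset.sum_congr rfl fun p _ => by ring

lemma ip_conj (x y : ι → ℂ) : ip y x = star (ip x y) := by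
  simp [ip, star_sum, mul_comm]

lemma ip_sum_left {A : Type*} (s : Finset A) (f : A → ι → ℂ) (y : ι → ℂ) :
    ip (∑ i ∈ s, f i) y = ∑ i ∈ s, ip (f i) y := by
  classical
  induction s using Finset.induction with
  | empty => simp [ip]
  | insert _ _ h ih => rw [Finset.sum_insert h, ip_add_left, ih, Finset.sum_insert h]

lemma ip_sum_right {A : Type*} (s : Finset A) (f : A → ι → ℂ) (y : ι → ℂ) :
    ip y (∑ i ∈ s, f i) = ∑ i ∈ s, ip y (f i) := by
  classical
  induction s using Finset.induction with
  | empty => simp [ip]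
  | insert _ _ h ih => rw [Finset.sum_insert h, ip_add_right, ih, Finset.sum_insert h]

lemma ip_zero_left (y : ι → ℂ) : ip 0 y = 0 := by simp [ip]

lemma ip_zero_right (y : ι → ℂ) : ip y 0 = 0 := by simp [ip]

lemma ip_self_re (x : ι → ℂ) : (ip x x).re = ∑ p, Complex.normSq (x p) := by
  rw [ip, Complex.re_sum]
  exact Finset.sum_congr rfl fun p _ => by
    rw [Complex.star_def, ← Complex.normSq_eq_conj_mul_self, Complex.ofReal_re]

lemma ip_self_nonneg (x : ι → ℂ) : 0 ≤ (ip x x).re := by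
  rw [ip_self_re]; exact Finset.sum_nonneg fun p _ => Complex.normSq_nonneg _

lemma ip_self_eq_zero {x : ι → ℂ} (h : (ip x x).re = 0) : x = 0 := by
  rw [ip_self_re] at h
  funext p
  have := (Finset.sum_eq_zero_iff_of_nonneg (fun p _ => Complex.normSq_nonneg (x p))).1 h p
    (Finset.mem_univ p)
  simpa using Complex.normSq_eq_zero.mp this

lemma nrm_sq (x : ι → ℂ) : (nrm x) ^ 2 = (ip x x).re := by
  rw [nrm, Real.sq_sqrt (ip_self_nonneg x)]

lemma ip_self_of_nrm_one {x : ι → ℂ} (h : nrm x = 1) : (ip x x).re = 1 := by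
  rw [← nrm_sq, h]; norm_num

lemma nrm_one_of_ip_self {x : ι → ℂ} (h : (ip x x).re = 1) : nrm x = 1 := by
  rw [nrm, h, Real.sqrt_one]


section PV
variable {n m : ℕ}

lemma prodVec_add_left (a b : Fin n → ℂ) (c : Fin m → ℂ) :
    prodVec (a + b) c = prodVec a c + prodVec b c := by
  funext p; simp [prodVec, add_mul]

lemma prodVec_add_right (a : Fin n → ℂ) (b c : Fin m → ℂ) :
    prodVec a (b + c) = prodVec a b + prodVec a c := by
  funext p; simp [prodVec, mul_add]

lemma prodVec_smul_left (s : ℂ) (a : Fin n → ℂ) (c : Fin m → ℂ) :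
    prodVec (s • a) c = s • prodVec a c := by
  funext p; simp [prodVec]; ring

lemma prodVec_smul_right (s : ℂ) (a : Fin n → ℂ) (c : Fin m → ℂ) :
    prodVec a (s • c) = s • prodVec a c := by
  funext p; simp [prodVec]; ring

lemma prodVec_zero_left (c : Fin m → ℂ) : prodVec (0 : Fin n → ℂ) c = 0 := by
  funext p; simp [prodVec]

lemma prodVec_zero_right (a : Fin n → ℂ) : prodVec a (0 : Fin m → ℂ) = 0 := by
  funext p; simp [prodVec]

lemma prodVec_sub_right (a : Fin n → ℂ) (b c : Fin m → ℂ) :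
    prodVec a (b - c) = prodVec a b - prodVec a c := by
  funext p; simp [prodVec, mul_sub]

lemma prodVec_sum_left {A : Type*} (s : Finset A) (f : A → Fin n → ℂ) (c : Fin m → ℂ) :
    prodVec (∑ i ∈ s, f i) c = ∑ i ∈ s, prodVec (f i) c := by
  funext p; simp [prodVec, Finset.sum_apply, Finset.sum_mul]

lemma prodVec_sum_right {A : Type*} (s : Finset A) (a : Fin n → ℂ) (f : A → Fin m → ℂ) :
    prodVec a (∑ i ∈ s, f i) = ∑ i ∈ s, prodVec a (f i) := by
  funext p; simp [prodVec, Finset.sum_apply, Finset.mul_sum]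

lemma ip_prodVec (a c : Fin n → ℂ) (b d : Fin m → ℂ) :
    ip (prodVec a b) (prodVec c d) = ip a c * ip b d := by
  have hrhs : ip a c * ip b d = ∑ p, ∑ q, (star (a p) * c p) * (star (b q) * d q) := by
    rw [ip, ip, Finset.sum_mul_sum]
  rw [hrhs, ip, Fintype.sum_prod_type]
  exact Finset.sum_congr rfl fun p _ => Finset.sum_congr rfl fun q _ => by
    simp only [prodVec, star_mul']; ring

lemma SRle_smul {k : ℕ} {w : Fin n × Fin m → ℂ} (s : ℂ) (h : SRle k w) : SRle k (s • w) := by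
  obtain ⟨a, b, rfl⟩ := h
  refine ⟨fun i => s • a i, b, ?_⟩
  rw [Finset.smul_sum]
  exact Finset.sum_congr rfl fun i _ => (prodVec_smul_left s (a i) (b i)).symm

end PV

section Numeric

lemma lin_coeff_zero {a b : ℝ} (hb : b ≤ 0) (H : ∀ t : ℝ, 2 * a * t + b * t ^ 2 ≤ 0) :
    a = 0 := by
  by_contra ha
  have hb1 : (0:ℝ) < 1 - b := by linarith
  set r : ℝ := (1 - b)⁻¹ with hr
  have hrpos : 0 < r := inv_pos.2 hb1
  have hone : (1 - b) * r = 1 := mul_inv_cancel₀ (ne_of_gt hb1)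
  have hone' : r - b * r = 1 := by linear_combination hone
  have hbr : -1 < b * r := by linarith
  have ha2 : 0 < a ^ 2 := by positivity
  have h2 := H (a * r)
  have key : 0 < 2 * a * (a * r) + b * (a * r) ^ 2 := by
    have hpos : 0 < (2 + b * r) * (a ^ 2 * r) := by
      have : (0:ℝ) < 2 + b * r := by linarith
      exact mul_pos this (mul_pos ha2 hrpos)
    nlinarith [hpos]
  linarith

lemma quartic_contra {C2 C4 : ℝ} (h2 : 0 < C2) (h4 : C4 ≤ 0)
    (H : ∀ t : ℝ, 2 * C2 * t ^ 2 + 2 * C4 * t ^ 4 ≤ 0) : False := by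
  have hM : (0:ℝ) < 1 - C4 := by linarith
  set u : ℝ := C2 / (2 * (1 - C4)) with hu
  have hupos : 0 < u := by positivity
  have hu2 : u * (2 * (1 - C4)) = C2 := div_mul_cancel₀ _ (by positivity)
  have ht := H (Real.sqrt u)
  rw [Real.sq_sqrt hupos.le] at ht
  have h4' : (Real.sqrt u) ^ 4 = u ^ 2 := by
    rw [show (4:ℕ) = 2 * 2 from rfl, pow_mul, Real.sq_sqrt hupos.le]
  rw [h4'] at ht
  nlinarith [ht, hupos, hu2, mul_pos hupos hupos]

end Numeric

section Expand

variable {ι : Type*} [Fintype ι]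

lemma ip_expand_lin (x0 x1 : ι → ℂ) (s : ℂ) :
    (ip (x0 + s • x1) (x0 + s • x1)).re
      = (ip x0 x0).re + 2 * (s * ip x0 x1).re + Complex.normSq s * (ip x1 x1).re := by
  simp only [ip_add_left, ip_add_right, ip_smul_left, ip_smul_right]
  rw [ip_conj x0 x1]
  simp only [Complex.add_re, Complex.add_im, Complex.mul_re, Complex.mul_im, Complex.star_def, map_mul,
    Complex.conj_re, Complex.conj_im, Complex.normSq_apply]
  ring

lemma ip_expand_quad (x0 x1 x2 : ι → ℂ) (s : ℂ) :
    (ip (x0 + s • x1 + s ^ 2 • x2) (x0 + s • x1 + s ^ 2 • x2)).re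
      = (ip x0 x0).re + 2 * (s * ip x0 x1).re
        + (Complex.normSq s * (ip x1 x1).re + 2 * (s ^ 2 * ip x0 x2).re)
        + 2 * Complex.normSq s * (s * ip x1 x2).re
        + Complex.normSq s ^ 2 * (ip x2 x2).re := by
  simp only [ip_add_left, ip_add_right, ip_smul_left, ip_smul_right]
  rw [ip_conj x0 x1, ip_conj x0 x2, ip_conj x1 x2]
  simp only [pow_two, Complex.add_re, Complex.add_im, Complex.mul_re, Complex.mul_im,
    Complex.star_def, map_mul, Complex.conj_re, Complex.conj_im, Complex.normSq_apply]
  ring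

end Expand

section Repr

lemma sum_dite_fin {V : Type*} [AddCommMonoid V] {k r : ℕ} (hrk : r ≤ k) (G : Fin r → V) :
    (∑ i : Fin k, if h : (i : ℕ) < r then G ⟨i, h⟩ else 0) = ∑ i : Fin r, G i := by
  rw [Fin.sum_univ_eq_sum_range (fun i => if h : i < r then G ⟨i, h⟩ else 0) k]
  have h2 : (∑ i : Fin r, G i)
      = ∑ i ∈ Finset.range r, (fun i => if h : i < r then G ⟨i, h⟩ else 0) i := by
    rw [← Fin.sum_univ_eq_sum_range]
    exact Finset.sum_congr rfl fun i _ => by rw [dif_pos i.isLt, Fin.eta]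
  rw [h2]
  exact (Finset.sum_subset (Finset.range_subset_range.2 hrk) (fun x _ hx => by
    rw [dif_neg (by simpa using hx)])).symm

lemma ip_eq_inner {m : ℕ} (x y : EuclideanSpace ℂ (Fin m)) :
    (inner ℂ x y : ℂ) = ip ((WithLp.linearEquiv 2 ℂ (Fin m → ℂ)) x)
      ((WithLp.linearEquiv 2 ℂ (Fin m → ℂ)) y) := by
  rw [PiLp.inner_apply]
  simp [ip, RCLike.inner_apply, Complex.star_def, WithLp.linearEquiv, mul_comm]

lemma repr_on {n m k : ℕ} {w : Fin n × Fin m → ℂ} (h : SRle k w) :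
    ∃ (A : Fin k → Fin n → ℂ) (E : Fin k → Fin m → ℂ),
      w = ∑ j, prodVec (A j) (E j) ∧
      (∀ j l, j ≠ l → ip (E j) (E l) = 0) ∧
      (∀ j, ip (E j) (E j) = 1 ∨ (E j = 0 ∧ A j = 0)) := by
  classical
  obtain ⟨a, b, rfl⟩ := h
  set eqv := WithLp.linearEquiv 2 ℂ (Fin m → ℂ) with heqv
  set b' : Fin k → EuclideanSpace ℂ (Fin m) := fun j => eqv.symm (b j) with hb'
  set W : Submodule ℂ (EuclideanSpace ℂ (Fin m)) := Submodule.span ℂ (Set.range b') with hW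
  set r := Module.finrank ℂ W with hr
  have hrk : r ≤ k := by
    have h1 := finrank_span_le_card (R := ℂ) (Set.range b')
    rw [Set.toFinset_card] at h1
    exact le_trans h1 (le_trans (Fintype.card_range_le b') (by simp))
  set ob := stdOrthonormalBasis ℂ W with hob
  set B : Fin k → W := fun j => ⟨b' j, Submodule.subset_span ⟨j, rfl⟩⟩ with hB
  set c : Fin k → Fin r → ℂ := fun j i => ob.repr (B j) i with hc
  set eW : Fin r → EuclideanSpace ℂ (Fin m) := fun i => ((ob i : W) : EuclideanSpace ℂ (Fin m))
    with heW
  set E' : Fin r → (Fin m → ℂ) := fun i => eqv (eW i) with hE'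
  have hbdec : ∀ j, b j = ∑ i, c j i • E' i := by
    intro j
    have h1 : ∑ i, c j i • ob i = B j := ob.sum_repr (B j)
    have h4 : (∑ i, c j i • eW i) = b' j := by
      have h2 : ((∑ i, c j i • ob i : W) : EuclideanSpace ℂ (Fin m)) = ∑ i, c j i • eW i := by
        rw [AddSubmonoidClass.coe_finset_sum]
        exact Finset.sum_congr rfl fun i _ => rfl
      rw [← h2, h1]
    have h5 := congrArg eqv h4
    rw [map_sum] at h5
    simp only [map_smul] at h5
    have h6 : eqv (b' j) = b j := eqv.apply_symm_apply (b j)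
    rw [h6] at h5
    exact h5.symm
  have horthE' : ∀ i l, ip (E' i) (E' l) = if i = l then 1 else 0 := by
    intro i l
    have h1 : (inner ℂ (eW i) (eW l) : ℂ) = if i = l then 1 else 0 := by
      rw [heW]
      have := orthonormal_iff_ite.mp ob.orthonormal i l
      rw [Submodule.coe_inner] at this
      exact this
    rw [hE']
    simp only [heqv]
    rw [← ip_eq_inner (eW i) (eW l)]
    exact h1
  refine ⟨fun i => if h : (i : ℕ) < r then ∑ j, c j ⟨i, h⟩ • a j else 0,
          fun i => if h : (i : ℕ) < r then E' ⟨i, h⟩ else 0, ?_, ?_, ?_⟩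
  · have key : (∑ i : Fin k, if h : (i : ℕ) < r then
        prodVec (∑ j, c j ⟨i, h⟩ • a j) (E' ⟨i, h⟩) else 0) = ∑ j, prodVec (a j) (b j) := by
      rw [sum_dite_fin hrk (fun i => prodVec (∑ j, c j i • a j) (E' i))]
      have h1 : ∀ i : Fin r, prodVec (∑ j, c j i • a j) (E' i)
          = ∑ j, c j i • prodVec (a j) (E' i) := by
        intro i
        rw [prodVec_sum_left]
        exact Finset.sum_congr rfl fun j _ => prodVec_smul_left _ _ _
      rw [Finset.sum_congr rfl fun i _ => h1 i, Finset.sum_comm]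
      refine Finset.sum_congr rfl fun j _ => ?_
      rw [hbdec j, prodVec_sum_right]
      exact Finset.sum_congr rfl fun i _ => (prodVec_smul_right _ _ _).symm
    rw [← key]
    refine Finset.sum_congr rfl fun i _ => ?_
    dsimp only
    by_cases h : (i : ℕ) < r
    · rw [dif_pos h, dif_pos h, dif_pos h]
    · rw [dif_neg h, dif_neg h, dif_neg h, prodVec_zero_left]
  · intro j l hjl
    dsimp only
    by_cases hj : (j : ℕ) < r
    · by_cases hl : (l : ℕ) < r
      · rw [dif_pos hj, dif_pos hl, horthE']
        rw [if_neg (fun hh => hjl (Fin.ext (by simpa using congrArg Fin.val hh)))]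
      · rw [dif_neg hl, ip_zero_right]
    · rw [dif_neg hj, ip_zero_left]
  · intro j
    dsimp only
    by_cases hj : (j : ℕ) < r
    · left; rw [dif_pos hj, horthE', if_pos rfl]
    · right; rw [dif_neg hj, dif_neg hj]; exact ⟨rfl, rfl⟩

end Repr

section Proj

variable {n m : ℕ} (t : Finset (Fin n × Fin m)) (v : Fin n × Fin m → Fin n × Fin m → ℂ)

/-- Orthogonal projection onto the span of `v i`, `i ∈ t`. -/
def Pj (x : Fin n × Fin m → ℂ) : Fin n × Fin m → ℂ := ∑ i ∈ t, ip (v i) x • v i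

/-- Squared norm of the projection. -/
def F (x : Fin n × Fin m → ℂ) : ℝ := ∑ i ∈ t, Complex.normSq (ip (v i) x)

lemma Pj_add (x y : Fin n × Fin m → ℂ) : Pj t v (x + y) = Pj t v x + Pj t v y := by
  rw [Pj, Pj, Pj, ← Finset.sum_add_distrib]
  exact Finset.sum_congr rfl fun i _ => by rw [ip_add_right, add_smul]

lemma Pj_smul (s : ℂ) (x : Fin n × Fin m → ℂ) : Pj t v (s • x) = s • Pj t v x := by
  rw [Pj, Pj, Finset.smul_sum]
  exact Finset.sum_congr rfl fun i _ => by rw [ip_smul_right, mul_smul]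

lemma ip_v_Pj (horth : ∀ i j, ip (v i) (v j) = if i = j then 1 else 0) {i : Fin n × Fin m} (hi : i ∈ t) (x : Fin n × Fin m → ℂ) :
    ip (v i) (Pj t v x) = ip (v i) x := by
  rw [Pj, ip_sum_right]
  rw [Finset.sum_eq_single i (fun j hj hne => by
    rw [ip_smul_right, horth i j, if_neg (fun hh => hne hh.symm), mul_zero]) (fun h => absurd hi h)]
  rw [ip_smul_right, horth i i, if_pos rfl, mul_one]

lemma Pj_idem (horth : ∀ i j, ip (v i) (v j) = if i = j then 1 else 0) (x : Fin n × Fin m → ℂ) : Pj t v (Pj t v x) = Pj t v x := by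
  conv_lhs => rw [Pj]
  conv_rhs => rw [Pj]
  exact Finset.sum_congr rfl fun i hi => by rw [ip_v_Pj t v horth hi]

lemma ip_Pj_left (x y : Fin n × Fin m → ℂ) :
    ip (Pj t v x) y = ∑ i ∈ t, star (ip (v i) x) * ip (v i) y := by
  rw [Pj, ip_sum_left]
  exact Finset.sum_congr rfl fun i _ => by rw [ip_smul_left]

lemma ip_Pj_right (x y : Fin n × Fin m → ℂ) :
    ip x (Pj t v y) = ∑ i ∈ t, ip (v i) y * ip x (v i) := by
  rw [Pj, ip_sum_right]
  exact Finset.sum_congr rfl fun i _ => by rw [ip_smul_right]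

lemma ip_Pj_selfadj (x y : Fin n × Fin m → ℂ) : ip (Pj t v x) y = ip x (Pj t v y) := by
  rw [ip_Pj_left, ip_Pj_right]
  exact Finset.sum_congr rfl fun i _ => by rw [ip_conj (v i) x]; ring

lemma ip_Pj_Pj (horth : ∀ i j, ip (v i) (v j) = if i = j then 1 else 0) (x y : Fin n × Fin m → ℂ) :
    ip (Pj t v x) (Pj t v y) = ip (Pj t v x) y := by
  rw [ip_Pj_selfadj t v, Pj_idem t v horth, ← ip_Pj_selfadj t v]

lemma F_eq (horth : ∀ i j, ip (v i) (v j) = if i = j then 1 else 0) (x : Fin n × Fin m → ℂ) : F t v x = (ip (Pj t v x) (Pj t v x)).re := by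
  rw [ip_Pj_Pj t v horth, ip_Pj_left, Complex.re_sum, F]
  exact Finset.sum_congr rfl fun i _ => by
    rw [Complex.star_def, ← Complex.normSq_eq_conj_mul_self, Complex.ofReal_re]

lemma F_nonneg (x : Fin n × Fin m → ℂ) : 0 ≤ F t v x :=
  Finset.sum_nonneg fun i _ => Complex.normSq_nonneg _

lemma F_smul (s : ℂ) (x : Fin n × Fin m → ℂ) :
    F t v (s • x) = Complex.normSq s * F t v x := by
  rw [F, F, Finset.mul_sum]
  exact Finset.sum_congr rfl fun i _ => by rw [ip_smul_right, Complex.normSq_mul]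

lemma ip_x_Pjx (horth : ∀ i j, ip (v i) (v j) = if i = j then 1 else 0) (x : Fin n × Fin m → ℂ) :
    (ip x (Pj t v x)).re = F t v x := by
  have h1 : ip x (Pj t v x) = star (ip (Pj t v x) x) := ip_conj _ _
  rw [h1, Complex.star_def, Complex.conj_re, ← ip_Pj_Pj t v horth x x, ← F_eq t v horth]

lemma F_le_ip (horth : ∀ i j, ip (v i) (v j) = if i = j then 1 else 0) (x : Fin n × Fin m → ℂ) : F t v x ≤ (ip x x).re := by
  have h0 := ip_self_nonneg (x + (-1 : ℂ) • Pj t v x)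
  rw [ip_expand_lin x (Pj t v x) (-1)] at h0
  have h1 : ((-1 : ℂ) * ip x (Pj t v x)).re = -F t v x := by
    rw [neg_one_mul, Complex.neg_re, ip_x_Pjx t v horth]
  rw [h1] at h0
  simp only [Complex.normSq_neg, Complex.normSq_one, one_mul] at h0
  rw [← F_eq t v horth] at h0
  linarith

lemma Pj_eq_self_of_F (horth : ∀ i j, ip (v i) (v j) = if i = j then 1 else 0) (x : Fin n × Fin m → ℂ) (hF : F t v x = (ip x x).re) :
    Pj t v x = x := by
  have h0 : (ip (x + (-1 : ℂ) • Pj t v x) (x + (-1 : ℂ) • Pj t v x)).re = 0 := by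
    rw [ip_expand_lin x (Pj t v x) (-1)]
    have h1 : ((-1 : ℂ) * ip x (Pj t v x)).re = -F t v x := by
      rw [neg_one_mul, Complex.neg_re, ip_x_Pjx t v horth]
    rw [h1]
    simp only [Complex.normSq_neg, Complex.normSq_one, one_mul]
    rw [← F_eq t v horth]
    linarith
  have h2 := ip_self_eq_zero h0
  have h3 : x + (-1 : ℂ) • Pj t v x = x - Pj t v x := by
    funext p; simp [sub_eq_add_neg]
  rw [h3] at h2
  exact (sub_eq_zero.mp h2).symm

lemma F_continuous : Continuous (F t v) := by
  refine continuous_finset_sum t fun i _ => Complex.continuous_normSq.comp ?_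
  refine continuous_finset_sum Finset.univ fun p _ => ?_
  exact continuous_const.mul (continuous_apply p)

lemma nrm_continuous {ι : Type*} [Fintype ι] : Continuous (nrm (ι := ι)) := by
  have h1 : (nrm (ι := ι)) = fun x => Real.sqrt (∑ p, Complex.normSq (x p)) := by
    funext x; rw [nrm, ip_self_re]
  rw [h1]
  exact Real.continuous_sqrt.comp (continuous_finset_sum Finset.univ fun p _ =>
    Complex.continuous_normSq.comp (continuous_apply p))

end Proj

section Compact

variable {n m k : ℕ}

lemma ip_self_of_orth_rep (A : Fin k → Fin n → ℂ) (E : Fin k → Fin m → ℂ)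
    (horthE : ∀ j l, j ≠ l → ip (E j) (E l) = 0)
    (hunit : ∀ j, ip (E j) (E j) = 1 ∨ (E j = 0 ∧ A j = 0)) :
    (ip (∑ j, prodVec (A j) (E j)) (∑ j, prodVec (A j) (E j))).re
      = ∑ j, (ip (A j) (A j)).re := by
  rw [ip_sum_left, Complex.re_sum]
  refine Finset.sum_congr rfl fun j _ => ?_
  rw [ip_sum_right, Complex.re_sum]
  rw [Finset.sum_eq_single j (fun l _ hne => by
    rw [ip_prodVec, horthE j l (fun hh => hne hh.symm), mul_zero, Complex.zero_re])
    (fun h => absurd (Finset.mem_univ j) h)]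
  rcases hunit j with h1 | h1
  · rw [ip_prodVec, h1, mul_one]
  · simp [h1.2, ip_prodVec, ip_zero_left]

lemma entry_bound {N : ℕ} {x : Fin N → ℂ} {p : Fin N} :
    Complex.normSq (x p) ≤ (ip x x).re := by
  rw [ip_self_re]
  exact Finset.single_le_sum (fun q _ => Complex.normSq_nonneg (x q)) (Finset.mem_univ p)

lemma abs_le_one_of_normSq {z : ℂ} (h : Complex.normSq z ≤ 1) : ‖z‖ ≤ 1 := by
  rw [Complex.norm_def]
  exact Real.sqrt_le_one.mpr h

lemma srle_sphere_compact (hk : 1 ≤ k) :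
    IsCompact {w : Fin n × Fin m → ℂ | nrm w = 1 ∧ SRle k w} := by
  classical
  set Bsp := ((Fin k → Fin n → ℂ) × (Fin k → Fin m → ℂ)) with hBsp
  set φ : Bsp → (Fin n × Fin m → ℂ) := fun ab => ∑ j, prodVec (ab.1 j) (ab.2 j) with hφdef
  set K : Set Bsp := {ab | (∀ j p, ‖ab.1 j p‖ ≤ 1) ∧
    (∀ j q, ‖ab.2 j q‖ ≤ 1)} with hK
  have hKsub : K ⊆ Metric.closedBall 0 1 := by
    intro ab hab
    rw [Metric.mem_closedBall, dist_zero_right, Prod.norm_def]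
    refine max_le ?_ ?_
    · refine pi_norm_le_iff_of_nonneg zero_le_one |>.2 fun j => ?_
      refine pi_norm_le_iff_of_nonneg zero_le_one |>.2 fun p => ?_
      exact hab.1 j p
    · refine pi_norm_le_iff_of_nonneg zero_le_one |>.2 fun j => ?_
      refine pi_norm_le_iff_of_nonneg zero_le_one |>.2 fun q => ?_
      exact hab.2 j q
  have hKclosed : IsClosed K := by
    have h1 : K = (⋂ (j : Fin k) (p : Fin n), {ab : Bsp | ‖ab.1 j p‖ ≤ 1}) ∩
        (⋂ (j : Fin k) (q : Fin m), {ab : Bsp | ‖ab.2 j q‖ ≤ 1}) := by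
      ext ab; simp [hK, Set.mem_iInter]
    rw [h1]
    refine IsClosed.inter ?_ ?_
    · refine isClosed_iInter fun j => isClosed_iInter fun p => ?_
      exact isClosed_le (continuous_norm.comp ((continuous_apply p).comp
        ((continuous_apply j).comp continuous_fst))) continuous_const
    · refine isClosed_iInter fun j => isClosed_iInter fun q => ?_
      exact isClosed_le (continuous_norm.comp ((continuous_apply q).comp
        ((continuous_apply j).comp continuous_snd))) continuous_const
  have hKcompact : IsCompact K :=
    (isCompact_closedBall (0 : Bsp) 1).of_isClosed_subset hKclosed hKsub
  have hφcont : Continuous φ := by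
    have h1 : φ = fun ab => fun pq : Fin n × Fin m => ∑ j, ab.1 j pq.1 * ab.2 j pq.2 := by
      funext ab pq
      rw [hφdef]
      simp only [Finset.sum_apply, prodVec]
    rw [h1]
    refine continuous_pi fun pq => continuous_finset_sum Finset.univ fun j _ => ?_
    exact Continuous.mul ((continuous_apply pq.1).comp ((continuous_apply j).comp continuous_fst))
      ((continuous_apply pq.2).comp ((continuous_apply j).comp continuous_snd))
  have himg : {w : Fin n × Fin m → ℂ | nrm w = 1 ∧ SRle k w}
      = (φ '' K) ∩ {w | nrm w = 1} := by
    ext w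
    constructor
    · rintro ⟨hw1, hwS⟩
      refine ⟨?_, hw1⟩
      obtain ⟨A, E, hsum, horthE, hunit⟩ := repr_on hwS
      have hid : (ip w w).re = ∑ j, (ip (A j) (A j)).re := by
        rw [hsum]; exact ip_self_of_orth_rep A E horthE hunit
      have hone : (ip w w).re = 1 := ip_self_of_nrm_one hw1
      refine ⟨(A, E), ⟨?_, ?_⟩, hsum.symm⟩
      · intro j p
        refine abs_le_one_of_normSq (le_trans entry_bound ?_)
        rw [← hone, hid]
        refine Finset.single_le_sum (fun l _ => ip_self_nonneg (A l)) (Finset.mem_univ j)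
      · intro j q
        rcases hunit j with h1 | h1
        · refine abs_le_one_of_normSq (le_trans entry_bound ?_)
          rw [show (ip (E j) (E j)).re = 1 from by rw [h1]; norm_num]
        · show ‖E j q‖ ≤ 1
          rw [h1.1]; simp
    · rintro ⟨⟨ab, _, hab⟩, hw1⟩
      exact ⟨hw1, ab.1, ab.2, hab.symm⟩
  rw [himg]
  exact (hKcompact.image hφcont).inter_right (isClosed_eq nrm_continuous continuous_const)

lemma delta_ip {N : ℕ} (p0 : Fin N) :
    ip (fun p => if p = p0 then (1:ℂ) else 0) (fun p => if p = p0 then (1:ℂ) else 0) = 1 := by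
  rw [ip]
  rw [Finset.sum_eq_single p0 (fun q _ hq => by rw [if_neg hq, mul_zero])
    (fun h => absurd (Finset.mem_univ p0) h)]
  rw [if_pos rfl]
  simp

lemma srle_delta (hk : 1 ≤ k) (p0 : Fin n) (q0 : Fin m) :
    SRle k (prodVec (fun p => if p = p0 then (1:ℂ) else 0)
      (fun q => if q = q0 then (1:ℂ) else 0)) := by
  classical
  set j0 : Fin k := ⟨0, hk⟩
  set dp : Fin n → ℂ := fun p => if p = p0 then (1:ℂ) else 0 with hdp
  set dq : Fin m → ℂ := fun q => if q = q0 then (1:ℂ) else 0 with hdq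
  refine ⟨fun j => if j = j0 then dp else 0, fun _ => dq, ?_⟩
  have hterm : ∀ l : Fin k, prodVec (if l = j0 then dp else 0) dq
      = if l = j0 then prodVec dp dq else 0 := by
    intro l
    by_cases h : l = j0
    · rw [if_pos h, if_pos h]
    · rw [if_neg h, if_neg h, prodVec_zero_left]
  rw [Finset.sum_congr rfl (fun l _ => hterm l), Finset.sum_ite_eq' Finset.univ j0
    (fun _ => prodVec dp dq), if_pos (Finset.mem_univ j0)]

lemma srle_sphere_nonempty (hk : 1 ≤ k) (hn : 1 ≤ n) (hm : 1 ≤ m) :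
    ({w : Fin n × Fin m → ℂ | nrm w = 1 ∧ SRle k w}).Nonempty := by
  refine ⟨prodVec (fun p => if p = (⟨0, hn⟩ : Fin n) then (1:ℂ) else 0)
    (fun q => if q = (⟨0, hm⟩ : Fin m) then (1:ℂ) else 0), ?_, srle_delta hk _ _⟩
  apply nrm_one_of_ip_self
  rw [ip_prodVec, delta_ip, delta_ip, mul_one]
  norm_num

end Compact

section KeyPrep

variable {n m k : ℕ}

lemma delta_prod (p0 : Fin n) (q0 : Fin m) :
    prodVec (fun p => if p = p0 then (1:ℂ) else 0) (fun q => if q = q0 then (1:ℂ) else 0)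
      = fun pq => if pq = (p0, q0) then (1:ℂ) else 0 := by
  funext pq
  rcases pq with ⟨p, q⟩
  by_cases hp : p = p0 <;> by_cases hq : q = q0 <;>
    simp [prodVec, hp, hq, Prod.ext_iff]

lemma ip_delta {ι : Type*} [Fintype ι] [DecidableEq ι] (x : ι → ℂ) (z0 : ι) :
    ip x (fun z => if z = z0 then (1:ℂ) else 0) = star (x z0) := by
  rw [ip]
  rw [Finset.sum_eq_single z0 (fun z _ hz => by rw [if_neg hz, mul_zero])
    (fun h => absurd (Finset.mem_univ z0) h)]
  rw [if_pos rfl, mul_one]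

lemma srle_prodVec (hk : 1 ≤ k) (c : Fin n → ℂ) (d : Fin m → ℂ) :
    SRle k (prodVec c d) := by
  classical
  set j0 : Fin k := ⟨0, hk⟩
  refine ⟨fun j => if j = j0 then c else 0, fun _ => d, ?_⟩
  have hterm : ∀ l : Fin k, prodVec (if l = j0 then c else 0) d
      = if l = j0 then prodVec c d else 0 := by
    intro l
    by_cases h : l = j0
    · rw [if_pos h, if_pos h]
    · rw [if_neg h, if_neg h, prodVec_zero_left]
  rw [Finset.sum_congr rfl (fun l _ => hterm l), Finset.sum_ite_eq' Finset.univ j0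
    (fun _ => prodVec c d), if_pos (Finset.mem_univ j0)]

lemma ip_sub_left {ι : Type*} [Fintype ι] (x y z : ι → ℂ) :
    ip (x - y) z = ip x z - ip y z := by
  simp [ip, sub_mul, Finset.sum_sub_distrib]

lemma exists_phase (z : ℂ) :
    ∃ ψ : ℂ, Complex.normSq ψ = 1 ∧ (ψ ^ 2 * z).re = ‖z‖ := by
  by_cases hz : z = 0
  · exact ⟨1, by simp, by simp [hz]⟩
  · obtain ⟨ψ, hψ⟩ := IsAlgClosed.exists_pow_nat_eq
      ((starRingEnd ℂ) z / (‖z‖ : ℂ)) (n := 2) (by norm_num)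
    have habs : (0:ℝ) < ‖z‖ := by
      simpa [norm_pos_iff] using hz
    have h2 : Complex.normSq (ψ ^ 2) = 1 := by
      rw [hψ, Complex.normSq_div, Complex.normSq_conj, Complex.normSq_ofReal]
      rw [show Complex.normSq z = ‖z‖ * ‖z‖ by
        rw [← Complex.sq_norm]; ring]
      field_simp
    have h3 : Complex.normSq ψ = 1 := by
      have h4 : Complex.normSq ψ ^ 2 = 1 := by rw [← h2, map_pow]
      have h5 : 0 ≤ Complex.normSq ψ := Complex.normSq_nonneg ψ
      nlinarith
    refine ⟨ψ, h3, ?_⟩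
    rw [hψ, div_mul_eq_mul_div, ← Complex.normSq_eq_conj_mul_self]
    rw [show ((Complex.normSq z : ℂ) / (‖z‖ : ℂ)) = ((Complex.normSq z / ‖z‖ : ℝ) : ℂ) by
      push_cast; ring]
    rw [Complex.ofReal_re]
    rw [show Complex.normSq z = ‖z‖ * ‖z‖ by rw [← Complex.sq_norm]; ring]
    field_simp

/-- The linear map whose range is the tangent space to the rank-≤k matrices. -/
def PhiMap (a : Fin k → Fin n → ℂ) (e : Fin k → Fin m → ℂ) :
    ((Fin k → Fin n → ℂ) × (Fin k → Fin m → ℂ)) →ₗ[ℂ] (Fin n × Fin m → ℂ) where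
  toFun cd := (∑ j, prodVec (cd.1 j) (e j)) + (∑ j, prodVec (a j) (cd.2 j))
  map_add' x y := by
    simp only [Prod.fst_add, Prod.snd_add, Pi.add_apply, prodVec_add_left, prodVec_add_right,
      Finset.sum_add_distrib]
    abel
  map_smul' s x := by
    simp only [Prod.smul_fst, Prod.smul_snd, Pi.smul_apply, prodVec_smul_left, prodVec_smul_right,
      RingHom.id_apply, smul_add, Finset.smul_sum]

lemma PhiMap_apply (a : Fin k → Fin n → ℂ) (e : Fin k → Fin m → ℂ)
    (cd : (Fin k → Fin n → ℂ) × (Fin k → Fin m → ℂ)) :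
    PhiMap a e cd = (∑ j, prodVec (cd.1 j) (e j)) + (∑ j, prodVec (a j) (cd.2 j)) := rfl

lemma phimap_ker_le (a : Fin k → Fin n → ℂ) (e : Fin k → Fin m → ℂ)
    (ha : LinearIndependent ℂ a)
    (horthE : ∀ j l, j ≠ l → ip (e j) (e l) = 0)
    (hunitE : ∀ j, ip (e j) (e j) = 1) :
    Module.finrank ℂ (LinearMap.ker (PhiMap a e)) ≤ k * k := by
  classical
  set Psi : (LinearMap.ker (PhiMap a e)) →ₗ[ℂ] (Fin k × Fin k → ℂ) :=
    { toFun := fun x => fun lj => ip (e lj.1) ((x : (Fin k → Fin n → ℂ) × (Fin k → Fin m → ℂ)).2 lj.2)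
      map_add' := fun x y => by
        funext lj
        simp only [Submodule.coe_add, Prod.snd_add, Pi.add_apply, ip_add_right]
      map_smul' := fun s x => by
        funext lj
        simp only [Submodule.coe_smul, Prod.smul_snd, Pi.smul_apply, ip_smul_right,
          RingHom.id_apply]
        rfl } with hPsi
  have hinj : Function.Injective Psi := by
    rw [← LinearMap.ker_eq_bot]
    rw [LinearMap.ker_eq_bot']
    rintro ⟨⟨c, d⟩, hker⟩ hzero
    have hker' : (∑ j, prodVec (c j) (e j)) + (∑ j, prodVec (a j) (d j)) = 0 := hker
    have hz : ∀ l j, ip (e l) (d j) = 0 := by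
      intro l j
      have := congrFun hzero (l, j)
      simpa [hPsi] using this
    have hc : c = 0 := by
      funext l p
      have h0 : ∑ q, star (e l q) * (((∑ j, prodVec (c j) (e j)) +
          (∑ j, prodVec (a j) (d j))) (p, q)) = 0 := by
        rw [hker']; simp
      have h1 : ∀ q, ((∑ j, prodVec (c j) (e j)) + (∑ j, prodVec (a j) (d j))) (p, q)
          = (∑ j, c j p * e j q) + (∑ j, a j p * d j q) := by
        intro q
        simp [Finset.sum_apply, prodVec]
      rw [Finset.sum_congr rfl (fun q _ => by rw [h1 q])] at h0
      have h2 : ∑ q, star (e l q) * ((∑ j, c j p * e j q) + (∑ j, a j p * d j q))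
          = (∑ j, c j p * ip (e l) (e j)) + (∑ j, a j p * ip (e l) (d j)) := by
        rw [Finset.sum_congr rfl (fun q _ => mul_add _ _ _), Finset.sum_add_distrib]
        congr 1
        · rw [Finset.sum_congr rfl (fun q (_ : q ∈ Finset.univ) => Finset.mul_sum Finset.univ
            (fun j => c j p * e j q) (star (e l q))), Finset.sum_comm]
          refine Finset.sum_congr rfl fun j _ => ?_
          rw [ip, Finset.mul_sum]
          exact Finset.sum_congr rfl fun q _ => by ring
        · rw [Finset.sum_congr rfl (fun q (_ : q ∈ Finset.univ) => Finset.mul_sum Finset.univ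
            (fun j => a j p * d j q) (star (e l q))), Finset.sum_comm]
          refine Finset.sum_congr rfl fun j _ => ?_
          rw [ip, Finset.mul_sum]
          exact Finset.sum_congr rfl fun q _ => by ring
      rw [h2] at h0
      have h3 : ∑ j, c j p * ip (e l) (e j) = c l p := by
        rw [Finset.sum_eq_single l (fun j _ hj => by
          rw [horthE l j (fun hh => hj hh.symm), mul_zero])
          (fun h => absurd (Finset.mem_univ l) h), hunitE l, mul_one]
      have h4 : ∑ j, a j p * ip (e l) (d j) = 0 := by
        refine Finset.sum_eq_zero fun j _ => by rw [hz l j, mul_zero]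
      rw [h3, h4, add_zero] at h0
      simpa using h0
    have hd : d = 0 := by
      have hker2 : (∑ j, prodVec (a j) (d j)) = 0 := by
        rw [hc] at hker'
        simpa [prodVec_zero_left] using hker'
      funext j q
      have h5 : ∀ p, (∑ l, d l q • a l) p = 0 := by
        intro p
        have := congrFun hker2 (p, q)
        simpa [Finset.sum_apply, prodVec, mul_comm] using this
      have h6 : (fun i => d i q) = 0 := by
        have h7 : ∑ l, d l q • a l = 0 := funext h5
        have := Fintype.linearIndependent_iff.mp ha (fun l => d l q) h7
        funext i; exact this i
      exact congrFun h6 j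
    have hcd0 : ((c, d) : (Fin k → Fin n → ℂ) × (Fin k → Fin m → ℂ)) = 0 := by
      rw [Prod.ext_iff]
      exact ⟨hc, hd⟩
    exact Subtype.ext hcd0
  calc Module.finrank ℂ (LinearMap.ker (PhiMap a e))
      ≤ Module.finrank ℂ (Fin k × Fin k → ℂ) := LinearMap.finrank_le_finrank_of_injective hinj
    _ = k * k := by rw [Module.finrank_fintype_fun_eq_card]; simp

lemma finrank_dom :
    Module.finrank ℂ ((Fin k → Fin n → ℂ) × (Fin k → Fin m → ℂ)) = k * n + k * m := by
  rw [Module.finrank_prod]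
  congr 1
  · rw [(LinearEquiv.curry ℂ ℂ (Fin k) (Fin n)).symm.finrank_eq,
      Module.finrank_fintype_fun_eq_card]
    simp
  · rw [(LinearEquiv.curry ℂ ℂ (Fin k) (Fin m)).symm.finrank_eq,
      Module.finrank_fintype_fun_eq_card]
    simp

end KeyPrep

section Span

variable {n m : ℕ} (t : Finset (Fin n × Fin m)) (v : Fin n × Fin m → Fin n × Fin m → ℂ)

lemma vt_independent (horth : ∀ i j, ip (v i) (v j) = if i = j then 1 else 0) :
    LinearIndependent ℂ (fun i : {x // x ∈ t} => v i) := by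
  classical
  rw [Fintype.linearIndependent_iff]
  intro g hsum i
  have h0 : ip (v (i : Fin n × Fin m)) (∑ j : {x // x ∈ t}, g j • v j) = 0 := by
    rw [hsum, ip_zero_right]
  rw [ip_sum_right] at h0
  rw [Finset.sum_eq_single i (fun j _ hj => by
      rw [ip_smul_right, horth i j, if_neg (fun hh => hj (Subtype.ext hh.symm)), mul_zero])
    (fun h => absurd (Finset.mem_univ i) h)] at h0
  rw [ip_smul_right, horth i i, if_pos rfl, mul_one] at h0
  exact h0

lemma span_rank (horth : ∀ i j, ip (v i) (v j) = if i = j then 1 else 0) :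
    Module.finrank ℂ (Submodule.span ℂ (Set.range (fun i : {x // x ∈ t} => v i))) = t.card := by
  rw [finrank_span_eq_card (vt_independent t v horth)]
  exact Fintype.card_coe t

lemma Pj_fix_base (horth : ∀ i j, ip (v i) (v j) = if i = j then 1 else 0) {i0 : Fin n × Fin m} (hi0 : i0 ∈ t) : Pj t v (v i0) = v i0 := by
  classical
  rw [Pj]
  have h1 : ∀ i ∈ t, ip (v i) (v i0) • v i = if i = i0 then v i else 0 := by
    intro i _
    rw [horth i i0]
    by_cases h : i = i0
    · rw [if_pos h, if_pos h, one_smul]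
    · rw [if_neg h, if_neg h, zero_smul]
  rw [Finset.sum_congr rfl h1, Finset.sum_ite_eq' t i0 (fun i => v i), if_pos hi0]

lemma Pj_fix_span (horth : ∀ i j, ip (v i) (v j) = if i = j then 1 else 0) {x : Fin n × Fin m → ℂ}
    (hx : x ∈ Submodule.span ℂ (Set.range (fun i : {x // x ∈ t} => v i))) :
    Pj t v x = x := by
  induction hx using Submodule.span_induction with
  | mem x hxm =>
    obtain ⟨i, rfl⟩ := hxm
    exact Pj_fix_base t v horth i.2
  | zero => simp [Pj, ip_zero_right]
  | add x y _ _ hx hy => rw [Pj_add, hx, hy]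
  | smul s x _ hx => rw [Pj_smul, hx]

end Span

section Key

lemma ip_self_smul {ι : Type*} [Fintype ι] (s : ℂ) (u : ι → ℂ) :
    (ip (s • u) (s • u)).re = Complex.normSq s * (ip u u).re := by
  rw [ip_smul_left, ip_smul_right, ← mul_assoc, Complex.star_def,
    ← Complex.normSq_eq_conj_mul_self, Complex.re_ofReal_mul]

lemma key {n m k : ℕ} (hk : 1 ≤ k) (hkm : k ≤ m) (hmn : m ≤ n)
    (t : Finset (Fin n × Fin m)) (v : Fin n × Fin m → Fin n × Fin m → ℂ)
    (horth : ∀ i j, ip (v i) (v j) = if i = j then 1 else 0)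
    (hcard : (n - k) * (m - k) < t.card) :
    ∃ w, nrm w = 1 ∧ SRle k w ∧ Pj t v w = w := by
  classical
  have hm : 1 ≤ m := le_trans hk hkm
  have hn : 1 ≤ n := le_trans hm hmn
  obtain ⟨w0, hw0mem, hmaxOn⟩ := (srle_sphere_compact (n := n) (m := m) hk).exists_isMaxOn
    (srle_sphere_nonempty hk hn hm) (F_continuous t v).continuousOn
  obtain ⟨hw01, hw0S⟩ := hw0mem
  set μ := F t v w0 with hμ
  have hmax : ∀ u, nrm u = 1 → SRle k u → F t v u ≤ μ := fun u h1 h2 => hmaxOn ⟨h1, h2⟩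
  have hw0ip : (ip w0 w0).re = 1 := ip_self_of_nrm_one hw01
  have hμ0 : 0 ≤ μ := F_nonneg t v w0
  have hμ1 : μ ≤ 1 := by
    have h1 := F_le_ip t v horth w0
    rw [hw0ip] at h1
    exact h1
  have hmain : ∀ u, SRle k u → F t v u ≤ μ * (ip u u).re := by
    intro u hu
    by_cases h0 : u = 0
    · subst h0
      have hF0 : F t v (0 : Fin n × Fin m → ℂ) = 0 := by simp [F, ip_zero_right]
      rw [hF0, ip_zero_left]
      simp
    · have hipu : 0 < (ip u u).re := by
        rcases lt_or_eq_of_le (ip_self_nonneg u) with h | h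
        · exact h
        · exact absurd (ip_self_eq_zero h.symm) h0
      set s : ℂ := (((Real.sqrt (ip u u).re)⁻¹ : ℝ) : ℂ) with hs
      have hnsq : Complex.normSq s = ((ip u u).re)⁻¹ := by
        rw [hs, Complex.normSq_ofReal, ← mul_inv, Real.mul_self_sqrt (le_of_lt hipu)]
      have h1 : nrm (s • u) = 1 := by
        apply nrm_one_of_ip_self
        rw [ip_self_smul, hnsq, inv_mul_cancel₀ (ne_of_gt hipu)]
      have h2 := hmax (s • u) h1 (SRle_smul s hu)
      rw [F_smul, hnsq] at h2
      calc F t v u = (ip u u).re * (((ip u u).re)⁻¹ * F t v u) := by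
            field_simp
        _ ≤ (ip u u).re * μ := mul_le_mul_of_nonneg_left h2 (le_of_lt hipu)
        _ = μ * (ip u u).re := mul_comm _ _
  by_cases hμlt : μ < 1
  swap
  · have hμe : μ = 1 := le_antisymm hμ1 (not_lt.mp hμlt)
    exact ⟨w0, hw01, hw0S, Pj_eq_self_of_F t v horth w0 (by rw [← hμ, hμe, hw0ip])⟩
  exfalso
  obtain ⟨A, E, hsum, horthE, hunit⟩ := repr_on hw0S
  by_cases hind : LinearIndependent ℂ A
  -- CASE B (tangent space argument)
  · have hunitE : ∀ j, ip (E j) (E j) = 1 := by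
      intro j
      rcases hunit j with h | h
      · exact h
      · exact absurd h.2 (hind.ne_zero j)
    set S := Submodule.span ℂ (Set.range (fun i : {x // x ∈ t} => v i)) with hS
    set Tsp := LinearMap.range (PhiMap A E) with hTsp
    have hfinS : Module.finrank ℂ S = t.card := span_rank t v horth
    have hker := phimap_ker_le A E hind horthE hunitE
    have hrn := LinearMap.finrank_range_add_finrank_ker (PhiMap A E)
    rw [finrank_dom] at hrn
    rw [← hTsp] at hrn
    have hsup : Module.finrank ℂ (S ⊔ Tsp : Submodule ℂ (Fin n × Fin m → ℂ)) ≤ n * m := by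
      refine le_trans (Submodule.finrank_le _) ?_
      rw [Module.finrank_fintype_fun_eq_card]
      simp
    have hadd := Submodule.finrank_sup_add_finrank_inf_eq S Tsp
    obtain ⟨m', hm'⟩ := Nat.exists_eq_add_of_le hkm
    obtain ⟨n', hn'⟩ := Nat.exists_eq_add_of_le (le_trans hkm hmn)
    have hcard' : n' * m' < t.card := by
      have h1 : n - k = n' := by rw [hn', Nat.add_sub_cancel_left]
      have h2 : m - k = m' := by rw [hm', Nat.add_sub_cancel_left]
      rwa [h1, h2] at hcard
    have hgoal : 1 ≤ Module.finrank ℂ (S ⊓ Tsp : Submodule ℂ (Fin n × Fin m → ℂ)) := by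
      by_contra hcon
      push_neg at hcon
      have h0 : Module.finrank ℂ (S ⊓ Tsp : Submodule ℂ (Fin n × Fin m → ℂ)) = 0 :=
        Nat.lt_one_iff.mp hcon
      have hkn : k * n = k * k + k * n' := by rw [hn']; ring
      have hkm2 : k * m = k * k + k * m' := by rw [hm']; ring
      have hnm : n * m = k * k + k * n' + k * m' + n' * m' := by rw [hn', hm']; ring
      rw [hkn, hkm2] at hrn
      rw [hnm] at hsup
      set x1 := k * k with hx1
      set x2 := k * n' with hx2
      set x3 := k * m' with hx3
      set x4 := n' * m' with hx4
      omega
    have hne : (S ⊓ Tsp : Submodule ℂ (Fin n × Fin m → ℂ)) ≠ ⊥ := by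
      intro hb
      rw [hb, finrank_bot] at hgoal
      omega
    obtain ⟨T, hTmem, hT0⟩ := (Submodule.ne_bot_iff _).mp hne
    have hTmemS : T ∈ S := (Submodule.mem_inf.mp hTmem).1
    have hTmemT : T ∈ Tsp := (Submodule.mem_inf.mp hTmem).2
    have hTS : Pj t v T = T := Pj_fix_span t v horth hTmemS
    obtain ⟨cd, hcd⟩ := hTmemT
    set Ev := ∑ j, prodVec (cd.1 j) (cd.2 j) with hEv
    set z := ip (Pj t v w0) Ev - (μ:ℂ) * ip w0 Ev with hz
    obtain ⟨ψ, hψ1, hψ2⟩ := exists_phase z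
    have hT2pos : 0 < (ip T T).re := by
      rcases lt_or_eq_of_le (ip_self_nonneg T) with h | h
      · exact h
      · exact absurd (ip_self_eq_zero h.symm) hT0
    -- curve identity
    have hwid : ∀ s : ℂ, (∑ j, prodVec (A j + s • cd.1 j) (E j + s • cd.2 j))
        = w0 + s • T + s^2 • Ev := by
      intro s
      have hterm : ∀ j : Fin k, prodVec (A j + s • cd.1 j) (E j + s • cd.2 j)
          = prodVec (A j) (E j) + (s • prodVec (cd.1 j) (E j) + s • prodVec (A j) (cd.2 j)
            + s^2 • prodVec (cd.1 j) (cd.2 j)) := by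
        intro j
        rw [prodVec_add_left, prodVec_add_right, prodVec_add_right, prodVec_smul_left,
          prodVec_smul_right, prodVec_smul_left, prodVec_smul_right, smul_smul, ← pow_two]
        abel
      rw [Finset.sum_congr rfl (fun j _ => hterm j), Finset.sum_add_distrib, ← hsum,
        Finset.sum_add_distrib, Finset.sum_add_distrib, ← Finset.smul_sum, ← Finset.smul_sum,
        ← Finset.smul_sum, ← hEv, ← hcd, PhiMap_apply, smul_add]
      abel
    -- the coefficients
    set C2 : ℝ := (1 - μ) * (ip T T).re + 2 * (ψ^2 * z).re with hC2def
    set C4 : ℝ := F t v Ev - μ * (ip Ev Ev).re with hC4def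
    have hC4 : C4 ≤ 0 := by
      have := hmain Ev ⟨cd.1, cd.2, rfl⟩
      rw [hC4def]
      linarith
    have hC2 : 0 < C2 := by
      rw [hC2def, hψ2]
      have := norm_nonneg z
      nlinarith
    have hzsplit : (ψ^2 * z).re
        = (ψ^2 * (ip (Pj t v w0) Ev)).re - μ * (ψ^2 * (ip w0 Ev)).re := by
      rw [hz, mul_sub, Complex.sub_re,
        show ψ^2 * ((μ:ℂ) * ip w0 Ev) = (μ:ℂ) * (ψ^2 * ip w0 Ev) by ring,
        Complex.re_ofReal_mul]
    have hform : ∀ t' : ℝ,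
        F t v (w0 + ((t':ℂ)*ψ) • T + ((t':ℂ)*ψ)^2 • Ev)
          - μ * (ip (w0 + ((t':ℂ)*ψ) • T + ((t':ℂ)*ψ)^2 • Ev)
                  (w0 + ((t':ℂ)*ψ) • T + ((t':ℂ)*ψ)^2 • Ev)).re
        = (2*((ψ * ip (Pj t v w0) T).re - μ*(ψ * ip w0 T).re)) * t'
          + C2 * t'^2
          + (2*((ψ * ip T (Pj t v Ev)).re - μ*(ψ * ip T Ev).re)) * t'^3
          + C4 * t'^4 := by
      intro t'
      set s : ℂ := (t':ℂ)*ψ with hs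
      have hPw : Pj t v (w0 + s•T + s^2•Ev)
          = Pj t v w0 + s•T + s^2 • Pj t v Ev := by
        rw [Pj_add, Pj_add, Pj_smul, Pj_smul, hTS]
      rw [F_eq t v horth, hPw, ip_expand_quad (Pj t v w0) T (Pj t v Ev) s,
        ip_expand_quad w0 T Ev s]
      have h_nsq : Complex.normSq s = t'^2 := by
        rw [hs, Complex.normSq_mul, Complex.normSq_ofReal, hψ1, mul_one, ← pow_two]
      have h_lin : ∀ zz : ℂ, (s * zz).re = t' * (ψ*zz).re := by
        intro zz
        rw [hs, mul_assoc, Complex.re_ofReal_mul]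
      have h_sq : ∀ zz : ℂ, (s^2 * zz).re = t'^2 * (ψ^2*zz).re := by
        intro zz
        rw [hs, mul_pow, show ((t':ℂ))^2 = ((t'^2 : ℝ) : ℂ) by push_cast; ring,
          mul_assoc, Complex.re_ofReal_mul]
      rw [ip_Pj_Pj t v horth w0 Ev]
      rw [← F_eq t v horth w0, ← F_eq t v horth Ev, ← hμ, hw0ip]
      simp only [h_nsq, h_lin, h_sq]
      rw [hC2def, hC4def, hzsplit]
      ring
    have hquad : ∀ t' : ℝ, 2*C2*t'^2 + 2*C4*t'^4 ≤ 0 := by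
      intro t'
      have hSR : ∀ τ : ℝ, SRle k (w0 + ((τ:ℂ)*ψ) • T + ((τ:ℂ)*ψ)^2 • Ev) := by
        intro τ
        exact ⟨fun j => A j + ((τ:ℂ)*ψ) • cd.1 j, fun j => E j + ((τ:ℂ)*ψ) • cd.2 j,
          (hwid ((τ:ℂ)*ψ)).symm⟩
      have h1 := sub_nonpos.mpr (hmain _ (hSR t'))
      have h2 := sub_nonpos.mpr (hmain _ (hSR (-t')))
      rw [hform t'] at h1
      rw [hform (-t')] at h2
      ring_nf at h1 h2 ⊢
      linarith
    exact quartic_contra hC2 hC4 hquad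
  -- CASE A (dependent factors: rank-one perturbations allowed)
  · obtain ⟨g, hg, j0, hgj0⟩ := Fintype.not_linearIndependent_iff.mp hind
    have hSRplus : ∀ (c : Fin n → ℂ) (d : Fin m → ℂ) (τ : ℂ),
        SRle k (w0 + τ • prodVec c d) := by
      intro c d τ
      refine ⟨fun j => if j = j0 then τ • c else A j,
              fun j => if j = j0 then d else (E j - (g j / g j0) • E j0), ?_⟩
      have hterm : ∀ j : Fin k, prodVec (if j = j0 then τ • c else A j)
          (if j = j0 then d else (E j - (g j / g j0) • E j0))
          = if j = j0 then τ • prodVec c d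
            else (prodVec (A j) (E j) - (g j / g j0) • prodVec (A j) (E j0)) := by
        intro j
        by_cases h : j = j0
        · rw [if_pos h, if_pos h, if_pos h, prodVec_smul_left]
        · rw [if_neg h, if_neg h, if_neg h, prodVec_sub_right, prodVec_smul_right]
      rw [Finset.sum_congr rfl (fun j _ => hterm j)]
      rw [← Finset.add_sum_erase Finset.univ _ (Finset.mem_univ j0), if_pos rfl]
      have herase : ∑ j ∈ Finset.univ.erase j0,
          (if j = j0 then τ • prodVec c d
            else (prodVec (A j) (E j) - (g j / g j0) • prodVec (A j) (E j0)))
          = ∑ j ∈ Finset.univ.erase j0,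
            (prodVec (A j) (E j) - (g j / g j0) • prodVec (A j) (E j0)) := by
        refine Finset.sum_congr rfl fun j hj => ?_
        rw [if_neg (Finset.mem_erase.mp hj).1]
      rw [herase, Finset.sum_sub_distrib]
      have hsecond : ∑ j ∈ Finset.univ.erase j0, (g j / g j0) • prodVec (A j) (E j0)
          = prodVec (∑ j ∈ Finset.univ.erase j0, (g j / g j0) • A j) (E j0) := by
        rw [prodVec_sum_left]
        exact Finset.sum_congr rfl fun j _ => (prodVec_smul_left _ _ _).symm
      have haux : ∑ j ∈ Finset.univ.erase j0, (g j / g j0) • A j = -(A j0) := by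
        have h1 : ∑ j ∈ Finset.univ.erase j0, g j • A j + g j0 • A j0 = 0 := by
          rw [Finset.sum_erase_add Finset.univ _ (Finset.mem_univ j0)]
          exact hg
        have h2 : ∑ j ∈ Finset.univ.erase j0, (g j / g j0) • A j
            = (g j0)⁻¹ • ∑ j ∈ Finset.univ.erase j0, g j • A j := by
          rw [Finset.smul_sum]
          refine Finset.sum_congr rfl fun j _ => ?_
          rw [smul_smul, div_eq_mul_inv, mul_comm]
        rw [h2, show ∑ j ∈ Finset.univ.erase j0, g j • A j = -(g j0 • A j0) by
          linear_combination (norm := module) h1]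
        rw [smul_neg, smul_smul, inv_mul_cancel₀ hgj0, one_smul]
      rw [hsecond, haux]
      have hneg : prodVec (-(A j0)) (E j0) = -(prodVec (A j0) (E j0)) := by
        funext pq; simp [prodVec]
      rw [hneg, sub_neg_eq_add]
      rw [Finset.sum_erase_add Finset.univ _ (Finset.mem_univ j0)]
      rw [← hsum]
      abel
    -- second-order inequality in all rank-one directions
    have hquad : ∀ (c : Fin n → ℂ) (d : Fin m → ℂ) (τ : ℂ),
        2 * (τ * (ip (Pj t v w0) (prodVec c d) - (μ:ℂ) * ip w0 (prodVec c d))).re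
          + Complex.normSq τ * (F t v (prodVec c d)
            - μ * (ip (prodVec c d) (prodVec c d)).re) ≤ 0 := by
      intro c d τ
      set C := prodVec c d with hC
      have h1 := hmain _ (hSRplus c d τ)
      have hF : F t v (w0 + τ • C) = μ + 2*(τ * ip (Pj t v w0) C).re
          + Complex.normSq τ * F t v C := by
        rw [F_eq t v horth, Pj_add, Pj_smul, ip_expand_lin (Pj t v w0) (Pj t v C) τ,
          ip_Pj_Pj t v horth w0 C, ← F_eq t v horth w0, ← F_eq t v horth C, ← hμ]
      have hQ : (ip (w0 + τ • C) (w0 + τ • C)).re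
          = 1 + 2*(τ * ip w0 C).re + Complex.normSq τ * (ip C C).re := by
        rw [ip_expand_lin w0 C τ, hw0ip]
      rw [hF, hQ] at h1
      have hre : (τ * (ip (Pj t v w0) C - (μ:ℂ) * ip w0 C)).re
          = (τ * ip (Pj t v w0) C).re - μ * (τ * ip w0 C).re := by
        rw [mul_sub, Complex.sub_re]
        congr 1
        rw [show τ * ((μ:ℂ) * ip w0 C) = (μ:ℂ) * (τ * ip w0 C) by ring, Complex.re_ofReal_mul]
      rw [hre]
      ring_nf
      ring_nf at h1
      linarith
    have hzero : ∀ (c : Fin n → ℂ) (d : Fin m → ℂ),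
        ip (Pj t v w0) (prodVec c d) - (μ:ℂ) * ip w0 (prodVec c d) = 0 := by
      intro c d
      set C := prodVec c d with hC
      set z := ip (Pj t v w0) C - (μ:ℂ) * ip w0 C with hz
      have hγ : F t v C - μ * (ip C C).re ≤ 0 := by
        have := hmain C (srle_prodVec hk c d)
        linarith
      have hre0 : z.re = 0 := by
        refine lin_coeff_zero hγ fun t' => ?_
        have h1 := hquad c d ((t' : ℂ))
        rw [Complex.re_ofReal_mul, Complex.normSq_ofReal] at h1
        calc 2 * z.re * t' + (F t v C - μ * (ip C C).re) * t' ^ 2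
            = 2 * (t' * z.re) + t' * t' * (F t v C - μ * (ip C C).re) := by ring
          _ ≤ 0 := h1
      have him0 : z.im = 0 := by
        have hneg : -z.im = 0 := by
          refine lin_coeff_zero hγ fun t' => ?_
          have h1 := hquad c d ((t' : ℂ) * Complex.I)
          have hr : (((t' : ℂ) * Complex.I) * z).re = t' * (-z.im) := by
            rw [mul_assoc, Complex.re_ofReal_mul]
            congr 1
            simp [Complex.mul_re]
          have hns : Complex.normSq ((t' : ℂ) * Complex.I) = t' * t' := by
            rw [Complex.normSq_mul, Complex.normSq_I, Complex.normSq_ofReal, mul_one]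
          rw [hr, hns] at h1
          calc 2 * (-z.im) * t' + (F t v C - μ * (ip C C).re) * t' ^ 2
              = 2 * (t' * (-z.im)) + t' * t' * (F t v C - μ * (ip C C).re) := by ring
            _ ≤ 0 := h1
        linarith [hneg]
      exact Complex.ext hre0 him0
    -- conclude Pj w0 = μ • w0
    have hB : Pj t v w0 = (μ:ℂ) • w0 := by
      funext pq
      rcases pq with ⟨p, q⟩
      have h1 := hzero (fun p' => if p' = p then (1:ℂ) else 0)
        (fun q' => if q' = q then (1:ℂ) else 0)
      rw [delta_prod p q, ip_delta, ip_delta] at h1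
      have h2 : star ((Pj t v w0) (p, q)) - ((μ:ℂ)) * star (w0 (p, q)) = 0 := h1
      have h3 : star (star ((Pj t v w0) (p, q)) - ((μ:ℂ)) * star (w0 (p, q))) = 0 := by
        rw [h2, star_zero]
      rw [star_sub, star_star, star_mul', star_star] at h3
      have h4 : star ((μ:ℂ)) = ((μ:ℂ)) := by
        rw [Complex.star_def, Complex.conj_ofReal]
      rw [h4] at h3
      have h5 : (Pj t v w0) (p, q) = (μ:ℂ) * w0 (p, q) := by
        have := sub_eq_zero.mp h3
        exact this
      simpa using h5
    -- μ = μ², hence μ = 0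
    have hμsq : μ = μ * μ := by
      have h1 : μ = F t v w0 := hμ
      rw [F_eq t v horth, hB, ip_self_smul, Complex.normSq_ofReal, hw0ip, mul_one] at h1
      exact h1
    have hμz : μ = 0 := by nlinarith
    -- all v i vanish, contradiction
    obtain ⟨i0, hi0⟩ := Finset.card_pos.mp (lt_of_le_of_lt (Nat.zero_le _) hcard)
    have hvz : v i0 = 0 := by
      funext pq
      rcases pq with ⟨p, q⟩
      set dlt := prodVec (fun p' => if p' = p then (1:ℂ) else 0)
        (fun q' => if q' = q then (1:ℂ) else 0) with hdlt
      have h1 : F t v dlt ≤ 0 := by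
        have := hmain dlt (srle_prodVec hk _ _)
        rw [hμz] at this
        simpa using this
      have h2 : F t v dlt = 0 := le_antisymm h1 (F_nonneg t v dlt)
      have h3 := (Finset.sum_eq_zero_iff_of_nonneg
        (fun i _ => Complex.normSq_nonneg (ip (v i) dlt))).mp h2 i0 hi0
      have h4 : ip (v i0) dlt = 0 := Complex.normSq_eq_zero.mp h3
      rw [hdlt, delta_prod, ip_delta] at h4
      simpa using star_eq_zero.mp h4
    have h10 : ip (v i0) (v i0) = 1 := by rw [horth, if_pos rfl]
    rw [hvz, ip_zero_left] at h10
    exact one_ne_zero h10.symm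

end Key


end S17

open S17

/-- a k-block positive Hermitian operator has at most `(n-k)(m-k)`
negative eigenvalues (with multiplicity). -/
theorem stmt17 {n m k : ℕ} (hmn : m ≤ n) (hkm : k ≤ m)
    (X : Matrix (Fin n × Fin m) (Fin n × Fin m) ℂ) (hX : X.IsHermitian)
    (μ : Fin n × Fin m → ℝ) (v : Fin n × Fin m → Fin n × Fin m → ℂ)
    (horth : ∀ i j, ip (v i) (v j) = if i = j then 1 else 0)
    (heig : ∀ i, X.mulVec (v i) = (μ i : ℂ) • v i)
    (hbp : BlockPos k X) :
    (Finset.univ.filter (fun i => μ i < 0)).card ≤ (n - k) * (m - k) := by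
  classical
  by_contra hcon
  push_neg at hcon
  rcases Nat.eq_zero_or_pos k with hk0 | hk
  · subst hk0
    simp only [Nat.sub_zero] at hcon
    have h1 : (Finset.univ.filter (fun i => μ i < 0)).card ≤ n * m := by
      refine le_trans (Finset.card_filter_le _ _) ?_
      rw [Finset.card_univ, Fintype.card_prod, Fintype.card_fin, Fintype.card_fin]
    omega
  · set Neg := Finset.univ.filter (fun i => μ i < 0) with hNeg
    obtain ⟨w, hw1, hwS, hwP⟩ := key hk hkm hmn Neg v horth hcon
    have h0 := hbp w hw1 hwS
    set c : Fin n × Fin m → ℂ := fun i => ip (v i) w with hc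
    have hw : w = ∑ i ∈ Neg, c i • v i := by
      rw [← hwP]
      rfl
    have hXw : X.mulVec w = ∑ i ∈ Neg, ((μ i : ℂ) * c i) • v i := by
      rw [hw]
      have hlin : X.mulVec (∑ i ∈ Neg, c i • v i) = ∑ i ∈ Neg, c i • X.mulVec (v i) := by
        rw [← Matrix.mulVecLin_apply, map_sum]
        exact Finset.sum_congr rfl fun i _ => by rw [map_smul, Matrix.mulVecLin_apply]
      rw [hlin]
      exact Finset.sum_congr rfl fun i _ => by
        rw [heig i, smul_smul, mul_comm]
    have hterm : ∀ i ∈ Neg, ip (v i) (X.mulVec w) = (μ i : ℂ) * c i := by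
      intro i hi
      rw [hXw, ip_sum_right]
      rw [Finset.sum_eq_single i (fun j _ hj => by
        rw [ip_smul_right, horth i j, if_neg (fun hh => hj hh.symm), mul_zero])
        (fun h => absurd hi h)]
      rw [ip_smul_right, horth i i, if_pos rfl, mul_one]
    have hipXw : (ip w (X.mulVec w)).re = ∑ i ∈ Neg, μ i * Complex.normSq (c i) := by
      nth_rewrite 1 [hw]
      rw [ip_sum_left, Complex.re_sum]
      refine Finset.sum_congr rfl fun i hi => ?_
      rw [ip_smul_left, hterm i hi]
      rw [show star (c i) * ((μ i : ℂ) * c i) = ((μ i : ℂ)) * (star (c i) * c i) by ring,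
        Complex.star_def, ← Complex.normSq_eq_conj_mul_self, ← Complex.ofReal_mul,
        Complex.ofReal_re]
    have hsum1 : ∑ i ∈ Neg, Complex.normSq (c i) = 1 := by
      have h1 : (ip w w).re = 1 := ip_self_of_nrm_one hw1
      have h2 : ∀ i ∈ Neg, ip (v i) w = c i := fun i _ => rfl
      have h3 : (ip w w).re = ∑ i ∈ Neg, Complex.normSq (c i) := by
        conv_lhs => rw [hw]
        rw [ip_sum_left, Complex.re_sum]
        refine Finset.sum_congr rfl fun i hi => ?_
        rw [ip_smul_left]
        have h4 : ip (v i) w = c i := rfl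
        have h5 : ip (v i) (∑ j ∈ Neg, c j • v j) = c i := by
          rw [ip_sum_right]
          rw [Finset.sum_eq_single i (fun j _ hj => by
            rw [ip_smul_right, horth i j, if_neg (fun hh => hj hh.symm), mul_zero])
            (fun h => absurd hi h)]
          rw [ip_smul_right, horth i i, if_pos rfl, mul_one]
        rw [h5, Complex.star_def, ← Complex.normSq_eq_conj_mul_self, Complex.ofReal_re]
      rw [← h3, h1]
    obtain ⟨i0, hi0, hc0⟩ : ∃ i ∈ Neg, c i ≠ 0 := by
      by_contra hall
      push_neg at hall
      have : ∑ i ∈ Neg, Complex.normSq (c i) = 0 :=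
        Finset.sum_eq_zero fun i hi => by rw [hall i hi, map_zero]
      rw [hsum1] at this
      exact one_ne_zero this
    have hneg : (ip w (X.mulVec w)).re < 0 := by
      rw [hipXw]
      have hlt : ∑ i ∈ Neg, μ i * Complex.normSq (c i) < ∑ _i ∈ Neg, (0:ℝ) := by
        refine Finset.sum_lt_sum (fun i hi => ?_) ⟨i0, hi0, ?_⟩
        · have hμi : μ i < 0 := (Finset.mem_filter.mp hi).2
          have := Complex.normSq_nonneg (c i)
          nlinarith
        · have hμi : μ i0 < 0 := (Finset.mem_filter.mp hi0).2
          have := Complex.normSq_pos.mpr hc0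
          nlinarith
      rwa [Finset.sum_const_zero] at hlt
    linarith
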